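/- Let G be a graph containing an induced cycle C and a vertex v ∉ V(C) adjacent to at least k+2 vertices of C, and suppose |C| ≥ k+4. Then for every ℓ with 0 ≤ ℓ ≤ k, G contains a cycle with exactly ℓ chords. -/

import Mathlib

open List

/-- The set of chords of a closed walk `C` in `G`. -/
def cycleChords {V : Type*} (G : SimpleGraph V) {u : V} (C : G.Walk u u) : Set (Sym2 V) :=
  {e | e ∈ G.edgeSet ∧ (∀ v ∈ e, v ∈ C.support) ∧ e ∉ C.edges}

namespace Aux
variable {V : Type*} {G : SimpleGraph V}

/-- consecutive pairs of a list -/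
def cpairs (L : List V) : List (Sym2 V) := List.zipWith (fun a b => s(a, b)) L L.tail

/-- cyclic consecutive pairs -/
def ccE (L : List V) : List (Sym2 V) := List.zipWith (fun a b => s(a, b)) L (L.rotate 1)

lemma length_cpairs (L : List V) : (cpairs L).length = L.length - 1 := by
  simp [cpairs]

lemma length_ccE (L : List V) : (ccE L).length = L.length := by
  simp [ccE]

lemma getElem_cpairs (L : List V) (i : ℕ) (h : i < (cpairs L).length) :
    (cpairs L)[i] = s(L[i]'(by simp [length_cpairs] at h; omega),
      L[i+1]'(by simp [length_cpairs] at h; omega)) := by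
  simp [cpairs]

lemma getElem_ccE (L : List V) (i : ℕ) (h : i < (ccE L).length) :
    (ccE L)[i] = s(L[i]'(by simp [length_ccE] at h; omega),
      L[(i+1) % L.length]'(Nat.mod_lt _ (by simp [length_ccE] at h; omega))) := by
  have h' : i < L.length := by simpa [length_ccE] using h
  simp only [ccE, getElem_zipWith, getElem_rotate]

lemma ccE_rotate (L : List V) (r : ℕ) : ccE (L.rotate r) = (ccE L).rotate r := by
  unfold ccE
  rw [rotate_rotate, Nat.add_comm, ← rotate_rotate,
    zipWith_rotate_distrib _ _ _ _ (by simp)]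


lemma cpairs_append_singleton (L : List V) (hL : L ≠ []) (y : V) :
    cpairs (L ++ [y]) = cpairs L ++ [s(L.getLast hL, y)] := by
  induction L with
  | nil => simp at hL
  | cons a T ih =>
    cases T with
    | nil => simp [cpairs]
    | cons b T' =>
      have := ih (by simp)
      simp only [cpairs, cons_append, tail_cons, zipWith_cons_cons] at this ⊢
      rw [this]
      simp [getLast]

lemma mem_cpairs {L : List V} {e : Sym2 V} (he : e ∈ cpairs L) : ∀ x ∈ e, x ∈ L := by
  induction L with
  | nil => simp [cpairs] at he
  | cons a T ih =>
    cases T with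
    | nil => simp [cpairs] at he
    | cons b T' =>
      simp only [cpairs, tail_cons, zipWith_cons_cons, mem_cons] at he
      rcases he with rfl | he
      · intro x hx
        rcases Sym2.mem_iff.1 hx with rfl | rfl <;> simp
      · intro x hx
        have := ih (by simpa [cpairs] using he) x hx
        simp [this]

lemma zipWith_append_ignore {α β γ : Type*} (f : α → β → γ) :
    ∀ (X X' : List α) (Y : List β), Y.length ≤ X.length →
      List.zipWith f (X ++ X') Y = List.zipWith f X Y
  | _, _, [], _ => by simp
  | [], _, b :: Y', h => by simp at h
  | a :: X, X', b :: Y', h => by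
    simp only [cons_append, zipWith_cons_cons]
    rw [zipWith_append_ignore f X X' Y' (by simpa using h)]

lemma ccE_eq_cpairs (a : V) (T : List V) :
    ccE (a :: T) = cpairs ((a :: T) ++ [a]) := by
  have h1 : ((a :: T) ++ [a]).tail = T ++ [a] := by simp
  rw [cpairs, h1, ccE, rotate_cons_succ, rotate_zero]
  rw [show (a :: T) ++ [a] = (a :: T) ++ [a] from rfl,
    zipWith_append_ignore _ (a :: T) [a] (T ++ [a]) (by simp)]


lemma ccE_decomp (a : V) (T : List V) :
    ccE (a :: T) = cpairs (a :: T) ++ [s((a :: T).getLast (by simp), a)] := by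
  rw [ccE_eq_cpairs, cpairs_append_singleton]

lemma ccE_nodup {L : List V} (hnd : L.Nodup) (hlen : 3 ≤ L.length) : (ccE L).Nodup := by
  rw [List.nodup_iff_injective_get]
  rintro ⟨i, hi⟩ ⟨j, hj⟩ hij
  simp only [List.get_eq_getElem] at hij
  rw [getElem_ccE, getElem_ccE] at hij
  have hgi : ∀ (p q : ℕ) (hp : p < L.length) (hq : q < L.length), L[p] = L[q] → p = q := by
    intro p q hp hq hpq
    have := List.nodup_iff_injective_get.1 hnd (a₁ := ⟨p, hp⟩) (a₂ := ⟨q, hq⟩) (by simpa using hpq)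
    simpa using this
  have hi' : i < L.length := by simpa [length_ccE] using hi
  have hj' : j < L.length := by simpa [length_ccE] using hj
  rw [Sym2.eq_iff] at hij
  have hn : 0 < L.length := by omega
  rcases hij with ⟨h1, h2⟩ | ⟨h1, h2⟩
  · exact Fin.ext (hgi _ _ _ _ h1)
  · have e1 := hgi _ _ _ _ h1
    have e2 := hgi _ _ _ _ h2
    have m1 : (j+1) % L.length = if j+1 = L.length then 0 else j+1 := by
      split <;> rename_i h
      · simp [h]
      · exact Nat.mod_eq_of_lt (by omega)
    have m2 : (i+1) % L.length = if i+1 = L.length then 0 else i+1 := by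
      split <;> rename_i h
      · simp [h]
      · exact Nat.mod_eq_of_lt (by omega)
    rw [m1] at e1; rw [m2] at e2
    split at e1 <;> split at e2 <;> omega

/-- Build a walk from a chain of adjacencies. -/
def walkOfChain : ∀ (a : V) (L : List V) (b : V), List.Chain G.Adj a (L ++ [b]) → G.Walk a b
  | _, [], _, h => SimpleGraph.Walk.cons (by simpa using List.chain_cons.1 h |>.1) SimpleGraph.Walk.nil
  | a, c :: T, b, h =>
    SimpleGraph.Walk.cons (List.chain_cons.1 h).1 (walkOfChain c T b (List.chain_cons.1 h).2)

lemma support_walkOfChain : ∀ (a : V) (L : List V) (b : V) (h : List.Chain G.Adj a (L ++ [b])),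
    (walkOfChain a L b h).support = a :: (L ++ [b])
  | _, [], _, h => by simp [walkOfChain]
  | a, c :: T, b, h => by
    simp [walkOfChain, support_walkOfChain c T b]
    exact support_walkOfChain c T b _

lemma edges_walkOfChain : ∀ (a : V) (L : List V) (b : V) (h : List.Chain G.Adj a (L ++ [b])),
    (walkOfChain a L b h).edges = cpairs (a :: (L ++ [b]))
  | _, [], _, h => by simp [walkOfChain, cpairs]
  | a, c :: T, b, h => by
    simp only [walkOfChain, SimpleGraph.Walk.edges_cons, edges_walkOfChain c T b]
    simp [cpairs]
    exact edges_walkOfChain c T b _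

lemma walkOfChain_not_nil (a : V) (L : List V) (h : List.Chain G.Adj a (L ++ [a])) :
    walkOfChain a L a h ≠ SimpleGraph.Walk.nil := by
  cases L <;> simp [walkOfChain]

lemma isCycle_walkOfChain (a : V) (T : List V) (h : List.Chain G.Adj a (T ++ [a]))
    (hnd : (a :: T).Nodup) (hlen : 3 ≤ (a :: T).length) :
    (walkOfChain a T a h).IsCycle := by
  constructor
  · constructor
    · constructor
      rw [edges_walkOfChain, show a :: (T ++ [a]) = (a :: T) ++ [a] by simp, ← ccE_eq_cpairs]
      exact ccE_nodup hnd hlen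
    · exact walkOfChain_not_nil a T h
  · rw [support_walkOfChain]
    simp only [List.tail_cons]
    simp only [List.nodup_cons] at hnd
    rcases hnd with ⟨ha, hT⟩
    rw [List.nodup_append]
    refine ⟨hT, by simp, ?_⟩
    intro x hx y hy hxy; rw [List.mem_singleton] at hy; subst hy; subst hxy; exact ha hx

lemma edges_eq_cpairs_support {a b : V} (p : G.Walk a b) : p.edges = cpairs p.support := by
  induction p with
  | nil => simp [cpairs]
  | @cons u w b h q ih =>
    rw [SimpleGraph.Walk.edges_cons, SimpleGraph.Walk.support_cons, ih]
    rw [q.support_eq_cons]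
    simp only [cpairs, List.tail_cons, List.zipWith_cons_cons]

lemma chain'_of_ccE {L : List V} (h : ∀ e ∈ ccE L, e ∈ G.edgeSet) : List.Chain' G.Adj L := by
  refine List.isChain_iff_getElem.2 ?_
  intro i hi
  have hlt : i < (ccE L).length := by simp [length_ccE]; omega
  have := h _ (List.getElem_mem hlt)
  rw [getElem_ccE, SimpleGraph.mem_edgeSet] at this
  have hmod : (i + 1) % L.length = i + 1 := Nat.mod_eq_of_lt (by omega)
  convert this using 2
  exact hmod.symm


lemma not_getLast_mem_dropLast {X : List V} (hX : X ≠ []) (hnd : X.Nodup) :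
    X.getLast hX ∉ X.dropLast := by
  intro hmem
  have h := List.dropLast_append_getLast hX
  rw [← h] at hnd
  rw [List.nodup_append] at hnd
  exact hnd.2.2 _ hmem _ (by simp) rfl

lemma exists_prefix_countP (p : V → Bool) :
    ∀ (R : List V) (t : ℕ), 0 < t → t ≤ R.countP p →
      ∃ P, P <+: R ∧ P.countP p = t ∧ ∃ hP : P ≠ [], p (P.getLast hP) = true
  | [], t, ht, hc => by simp at hc; omega
  | a :: T, t, ht, hc => by
    by_cases hpa : p a = true
    · rcases Nat.eq_or_lt_of_le ht with h1 | h1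
      · exact ⟨[a], ⟨T, rfl⟩, by simp [hpa, ← h1], by simp, by simp [hpa]⟩
      · have hc' : t - 1 ≤ T.countP p := by
          simp [List.countP_cons, hpa] at hc; omega
        obtain ⟨P, hpre, hcount, hne, hlast⟩ :=
          exists_prefix_countP p T (t - 1) (by omega) hc'
        refine ⟨a :: P, List.cons_prefix_cons.2 ⟨rfl, hpre⟩, ?_, by simp, ?_⟩
        · simp [List.countP_cons, hpa, hcount]; omega
        · rwa [List.getLast_cons hne]
    · have hpa' : p a = false := by simpa using hpa
      have hc' : t ≤ T.countP p := by
        simp [List.countP_cons, hpa'] at hc; omega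
      obtain ⟨P, hpre, hcount, hne, hlast⟩ := exists_prefix_countP p T t ht hc'
      refine ⟨a :: P, List.cons_prefix_cons.2 ⟨rfl, hpre⟩, ?_, by simp, ?_⟩
      · simp [List.countP_cons, hpa', hcount]
      · rwa [List.getLast_cons hne]

lemma exists_boundary (p : V → Bool) :
    ∀ (L : List V) (hL : L ≠ []), p (L.getLast hL) = true → (∃ y ∈ L, ¬ p y = true) →
      ∃ A x y B, L = A ++ x :: y :: B ∧ ¬ p x = true ∧ p y = true
  | [], hL, _, _ => by simp at hL
  | [c], hL, hlast, hex => by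
    simp only [List.getLast_singleton] at hlast
    obtain ⟨y, hy, hny⟩ := hex
    simp only [List.mem_singleton] at hy
    exact absurd (hy ▸ hlast) hny
  | c :: d :: T, hL, hlast, hex => by
    by_cases hT : ∃ y ∈ d :: T, ¬ p y = true
    · obtain ⟨A, x, y, B, hsplit, hx, hy⟩ :=
        exists_boundary p (d :: T) (by simp) (by rwa [List.getLast_cons (by simp)] at hlast) hT
      exact ⟨c :: A, x, y, B, by rw [List.cons_append, ← hsplit], hx, hy⟩
    · push_neg at hT
      obtain ⟨y, hy, hny⟩ := hex
      have hyc : y = c := by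
        rcases List.mem_cons.1 hy with rfl | h
        · rfl
        · exact absurd (hT y h) hny
      exact ⟨[], c, d, T, rfl, hyc ▸ hny, hT d (by simp)⟩

lemma mem_cpairs_of_mem_ccE {R P : List V} (hnd : R.Nodup) (hP : P <+: R)
    (hlt : P.length < R.length) {e : Sym2 V} (he : e ∈ ccE R) (hx : ∀ x ∈ e, x ∈ P) :
    e ∈ cpairs P := by
  obtain ⟨i, hi, hei⟩ := List.mem_iff_getElem.1 he
  have hi' : i < R.length := by simpa [length_ccE] using hi
  rw [getElem_ccE] at hei
  set m := P.length with hm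
  have htake : P = R.take m := List.prefix_iff_eq_take.1 hP
  have hidx : ∀ (j : ℕ) (hj : j < R.length), R[j] ∈ P → j < m := by
    intro j hj hjP
    rw [htake] at hjP
    obtain ⟨j', hj', hj'eq⟩ := List.mem_iff_getElem.1 hjP
    rw [List.getElem_take] at hj'eq
    have : j' = j := (hnd.getElem_inj_iff).1 hj'eq
    simp only [List.length_take] at hj'
    omega
  have h1 : i < m := hidx i hi' (hx _ (hei ▸ Sym2.mem_mk_left _ _))
  have h2 : (i+1) % R.length < m := hidx _ (Nat.mod_lt _ (by omega)) (hx _ (hei ▸ Sym2.mem_mk_right _ _))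
  have hin : i + 1 < R.length := by
    rcases Nat.lt_or_ge (i+1) R.length with h | h
    · exact h
    · have : i + 1 = R.length := by omega
      rw [this, Nat.mod_self] at h2
      omega
  simp only [Nat.mod_eq_of_lt hin] at hei h2
  have hcl : i < (cpairs P).length := by rw [length_cpairs]; omega
  refine List.mem_iff_getElem.2 ⟨i, hcl, ?_⟩
  have hP1 : i < P.length := by omega
  have hP2 : i + 1 < P.length := by omega
  have e1 : P[i]'hP1 = R[i]'hi' := by
    have : P[i]'hP1 = (R.take m)[i]'(htake ▸ hP1) := by congr 1
    rw [this, List.getElem_take]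
  have e2 : P[i+1]'hP2 = R[i+1]'hin := by
    have : P[i+1]'hP2 = (R.take m)[i+1]'(htake ▸ hP2) := by congr 1
    rw [this, List.getElem_take]
  rw [getElem_cpairs, e1, e2]
  exact hei


lemma core (G : SimpleGraph V) (v : V) (R : List V) (hR : R ≠ [])
    (hnd : R.Nodup) (hv : v ∉ R)
    (hchain : ∀ e ∈ ccE R, e ∈ G.edgeSet)
    (hind : ∀ e ∈ G.edgeSet, (∀ x ∈ e, x ∈ R) → e ∈ ccE R)
    (ℓ : ℕ) (p : V → Bool) (hpdef : ∀ w, p w = true ↔ G.Adj v w)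
    (hhead : G.Adj v (R.head hR))
    (hcount : ℓ + 2 ≤ R.dropLast.countP p) :
    ∃ (w : V) (C' : G.Walk w w), C'.IsCycle ∧ (cycleChords G C').ncard = ℓ := by
  classical
  obtain ⟨P, hpre, hcnt, hPne, hlastp⟩ :=
    exists_prefix_countP p R.dropLast (ℓ + 2) (by omega) hcount
  have hPR : P <+: R := hpre.trans (List.dropLast_prefix R)
  obtain ⟨a, P', rfl⟩ := List.exists_cons_of_ne_nil hPne
  have hRa : R.head hR = a := by
    obtain ⟨t, ht⟩ := hPR
    subst ht; rfl
  have ha : G.Adj v a := hRa ▸ hhead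
  have hchainP : List.Chain' G.Adj (a :: P') := (chain'_of_ccE hchain).prefix hPR
  have hlenP : ℓ + 2 ≤ (a :: P').length := hcnt ▸ List.countP_le_length (p := p)
  have hP'ne : P' ≠ [] := by
    intro h; subst h; simp at hlenP
  have hlast : G.Adj v ((a :: P').getLast (by simp)) := (hpdef _).1 hlastp
  have hvP : v ∉ a :: P' := fun h => hv (hPR.subset h)
  have hndP : (a :: P').Nodup := hnd.sublist hPR.sublist
  have hmlt : (a :: P').length < R.length := by
    have h1 := hpre.length_le
    have h2 : 0 < R.length := List.length_pos_iff.2 hR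
    simp only [List.length_dropLast] at h1
    omega
  -- the closed chain
  have hch2 : List.Chain' G.Adj (((a :: P') ++ [v]) ++ [a]) := by
    refine List.IsChain.append ?_ (List.isChain_singleton a) ?_
    · refine List.IsChain.append hchainP (List.isChain_singleton v) ?_
      intro x hx y hy
      simp only [List.head?_cons, Option.mem_def, Option.some.injEq] at hy
      rw [List.getLast?_eq_getLast (l := a :: P') (by simp)] at hx
      simp only [Option.mem_def, Option.some.injEq] at hx
      subst hx; subst hy
      exact hlast.symm
    · intro x hx y hy
      simp only [List.head?_cons, Option.mem_def, Option.some.injEq] at hy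
      rw [List.getLast?_eq_getLast (l := (a :: P') ++ [v]) (by simp)] at hx
      simp only [Option.mem_def, Option.some.injEq] at hx
      simp only [List.getLast_append_singleton] at hx
      subst hx; subst hy
      exact ha
  have hch : List.Chain G.Adj a ((P' ++ [v]) ++ [a]) := by
    have : ((a :: P') ++ [v]) ++ [a] = a :: ((P' ++ [v]) ++ [a]) := by simp
    rw [this] at hch2
    exact hch2
  set C' := walkOfChain a (P' ++ [v]) a hch with hC'
  set b := (a :: P').getLast (by simp) with hb
  have hbP' : b = P'.getLast hP'ne := List.getLast_cons hP'ne
  have hbmem : b ∈ a :: P' := List.getLast_mem _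
  have hcons : (a :: P') ++ [v] = a :: (P' ++ [v]) := by simp
  -- support membership
  have hsup : ∀ x, x ∈ C'.support ↔ x ∈ (a :: P') ++ [v] := by
    intro x
    rw [hC', support_walkOfChain]
    simp only [List.mem_cons, List.mem_append, List.mem_singleton]
    tauto
  -- edges
  have hedg : C'.edges = ccE (a :: (P' ++ [v])) := by
    rw [hC', edges_walkOfChain, ccE_eq_cpairs]
    congr 1
  have hgl : (a :: (P' ++ [v])).getLast (by simp) = v := List.getLast_concat (l := a :: P')
  have hccM : ccE (a :: (P' ++ [v])) = (cpairs (a :: P') ++ [s(b, v)]) ++ [s(v, a)] := by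
    rw [ccE_decomp a (P' ++ [v])]
    congr 1
    · rw [← hcons, cpairs_append_singleton (a :: P') (by simp) v]
    · rw [hgl]
  have hedges : C'.edges = (cpairs (a :: P') ++ [s(b, v)]) ++ [s(v, a)] := hedg.trans hccM
  -- cycle
  have hcyc : C'.IsCycle := by
    refine isCycle_walkOfChain a (P' ++ [v]) hch ?_ ?_
    · simp only [List.nodup_cons] at hndP ⊢
      rcases hndP with ⟨haP, hndP'⟩
      constructor
      · simp only [List.mem_append, List.mem_singleton]
        rintro (h | rfl)
        · exact haP h
        · exact hvP (by simp)
      · rw [List.nodup_append]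
        refine ⟨hndP', by simp, ?_⟩
        intro x hx y hy hxy; rw [List.mem_singleton] at hy; subst hy; subst hxy; exact hvP (by simp [hx])
    · simp only [List.length_cons, List.length_append, List.length_singleton]
      simp only [List.length_cons] at hlenP
      omega
  refine ⟨a, C', hcyc, ?_⟩
  -- chord set identification
  have hvP' : v ∉ P' := fun h => hvP (by simp [h])
  have hvne : v ∉ a :: P' := hvP
  have hchords : cycleChords G C' = (fun w => s(v, w)) '' {w | w ∈ P'.dropLast ∧ G.Adj v w} := by
    ext e
    simp only [cycleChords, Set.mem_setOf_eq, Set.mem_image]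
    constructor
    · rintro ⟨he, hsupp, hne⟩
      by_cases hvmem : v ∈ e
      · obtain ⟨w, rfl⟩ := Sym2.mem_iff_exists.1 hvmem
        have hadj : G.Adj v w := G.mem_edgeSet.mp he
        have hwM : w ∈ (a :: P') ++ [v] := (hsup w).1 (hsupp w (Sym2.mem_mk_right _ _))
        have hwv : w ≠ v := fun h => G.irrefl (h ▸ hadj)
        have hwP : w ∈ a :: P' := by
          rcases List.mem_append.1 hwM with h | h
          · exact h
          · exact absurd (List.mem_singleton.1 h) hwv
        have hwa : w ≠ a := by
          rintro rfl
          exact hne (by rw [hedges]; simp)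
        have hwb : w ≠ b := by
          rintro rfl
          refine hne ?_
          rw [hedges]
          simp only [List.mem_append, List.mem_singleton]
          left; right
          rw [Sym2.eq_swap]
        have hwP' : w ∈ P' := by
          rcases List.mem_cons.1 hwP with rfl | h
          · exact absurd rfl hwa
          · exact h
        have hwdl : w ∈ P'.dropLast := by
          conv at hwP' => rw [← List.dropLast_append_getLast hP'ne]
          rcases List.mem_append.1 hwP' with h | h
          · exact h
          · exact absurd (List.mem_singleton.1 h) (hbP' ▸ hwb)
        exact ⟨w, ⟨hwdl, hadj⟩, rfl⟩
      · have hxP : ∀ x ∈ e, x ∈ a :: P' := by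
          intro x hx
          have := (hsup x).1 (hsupp x hx)
          rcases List.mem_append.1 this with h | h
          · exact h
          · exact absurd (List.mem_singleton.1 h ▸ hx) hvmem
        have heR : e ∈ ccE R := hind e he (fun x hx => hPR.subset (hxP x hx))
        have hcp : e ∈ cpairs (a :: P') := mem_cpairs_of_mem_ccE hnd hPR hmlt heR hxP
        exact absurd (by rw [hedges]; simp only [List.mem_append]; left; left; exact hcp) hne
    · rintro ⟨w, ⟨hw1, hw2⟩, rfl⟩
      have hwP' : w ∈ P' := (List.dropLast_sublist P').subset hw1
      refine ⟨G.mem_edgeSet.mpr hw2, ?_, ?_⟩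
      · intro x hx
        rcases Sym2.mem_iff.1 hx with rfl | rfl
        · exact (hsup x).2 (by simp)
        · exact (hsup x).2 (by simp [hwP'])
      · rw [hedges]
        simp only [List.mem_append, List.mem_singleton]
        rintro ((h | h) | h)
        · exact hvne (mem_cpairs h v (Sym2.mem_mk_left _ _))
        · rcases Sym2.eq_iff.1 h with ⟨h1, h2⟩ | ⟨h1, h2⟩
          · exact hvne (h1 ▸ hbmem)
          · refine not_getLast_mem_dropLast hP'ne (hndP.sublist (List.sublist_cons_self a P')) ?_
            rw [← hbP', ← h2]
            exact hw1
        · rcases Sym2.eq_iff.1 h with ⟨h1, h2⟩ | ⟨h1, h2⟩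
          · have : a ∈ P'.dropLast := h2 ▸ hw1
            have haP' : a ∉ P' := (List.nodup_cons.1 hndP).1
            exact haP' ((List.dropLast_sublist P').subset this)
          · exact hvne (h1 ▸ List.mem_cons_self (a := a) (l := P'))
  -- counting
  rw [hchords]
  have hSfin : {w | w ∈ P'.dropLast ∧ G.Adj v w} = ↑((P'.dropLast.filter p).toFinset) := by
    ext w
    simp only [Set.mem_setOf_eq, Finset.coe_sort_coe, Set.mem_setOf_eq, List.coe_toFinset,
      Set.mem_setOf_eq, List.mem_filter]
    rw [hpdef]
  rw [Set.ncard_image_of_injOn, hSfin, Set.ncard_coe_finset,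
    List.toFinset_card_of_nodup ((hndP.sublist (List.sublist_cons_self a P')).sublist
      (List.dropLast_sublist P') |>.filter p)]
  · -- length of filter = ℓ
    rw [← List.countP_eq_length_filter]
    have h1 : p a = true := (hpdef a).2 ha
    have h2 : List.countP p P' = ℓ + 1 := by
      rw [List.countP_cons] at hcnt
      simp [h1] at hcnt
      omega
    have h3 : p (P'.getLast hP'ne) = true := hbP' ▸ hlastp
    have h4 : P'.dropLast ++ [P'.getLast hP'ne] = P' := List.dropLast_append_getLast hP'ne
    have h5 := congrArg (List.countP p) h4
    rw [List.countP_append] at h5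
    simp [h3] at h5
    omega
  · -- injOn
    intro w1 h1 w2 h2 heq
    simp only [Set.mem_setOf_eq] at h1 h2
    rcases Sym2.eq_iff.1 heq with ⟨_, h⟩ | ⟨hx, hy⟩
    · exact h
    · exfalso
      exact hvP' ((List.dropLast_sublist P').subset (hy ▸ h1.1))

end Aux

open Aux

theorem stmt19 {V : Type*} [Fintype V] (G : SimpleGraph V) (k : ℕ) (u : V)
    (C : G.Walk u u) (hC : C.IsCycle) (hInd : cycleChords G C = ∅)
    (hlen : k + 4 ≤ C.length) (v : V) (hv : v ∉ C.support)
    (hdeg : k + 2 ≤ {w | w ∈ C.support ∧ G.Adj v w}.ncard) :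
    ∀ l : ℕ, l ≤ k →
      ∃ (w : V) (C' : G.Walk w w), C'.IsCycle ∧ (cycleChords G C').ncard = l := by
  classical
  intro ℓ hℓ
  set p : V → Bool := fun w => decide (G.Adj v w) with hpd
  have hpdef : ∀ w, p w = true ↔ G.Adj v w := by intro w; simp [hpd]
  -- extract the cycle list
  have hsupne : C.support ≠ [] := C.support_ne_nil
  have hu : C.support.getLast hsupne = u := C.getLast_support
  have hsplit : C.support.dropLast ++ [u] = C.support := by
    have h := List.dropLast_append_getLast hsupne
    rw [hu] at h
    exact h
  have hlenL : C.support.dropLast.length = C.length := by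
    simp [C.length_support]
  have hLne : C.support.dropLast ≠ [] := by
    intro h
    rw [h] at hlenL
    simp at hlenL
    omega
  obtain ⟨a0, L', hL⟩ := List.exists_cons_of_ne_nil hLne
  have ha0 : a0 = u := by
    have h2 := hsplit
    rw [hL] at h2
    rw [C.support_eq_cons, List.cons_append] at h2
    exact (List.cons.inj h2).1
  subst ha0
  have hmem : ∀ x, x ∈ C.support ↔ x ∈ a0 :: L' := by
    intro x
    rw [← hsplit, hL]
    simp only [List.mem_append, List.mem_singleton, List.mem_cons]
    tauto
  have htail : C.support.tail = L' ++ [a0] := by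
    rw [← hsplit, hL]
    rfl
  have hndL : (a0 :: L').Nodup := by
    have htnd := hC.support_nodup
    rw [htail, List.nodup_append] at htnd
    rw [List.nodup_cons]
    refine ⟨?_, htnd.1⟩
    intro hu'
    exact htnd.2.2 _ hu' _ (by simp) rfl
  have hedges : C.edges = ccE (a0 :: L') := by
    rw [edges_eq_cpairs_support, ← hsplit, hL]
    exact (ccE_eq_cpairs a0 L').symm
  have hcsub : ∀ e ∈ ccE (a0 :: L'), e ∈ G.edgeSet := by
    intro e he
    rw [← hedges] at he
    exact C.edges_subset_edgeSet he
  have hindL : ∀ e ∈ G.edgeSet, (∀ x ∈ e, x ∈ a0 :: L') → e ∈ ccE (a0 :: L') := by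
    intro e he hx
    by_contra hne
    rw [← hedges] at hne
    have hmem' : e ∈ cycleChords G C := ⟨he, fun x hxx => (hmem x).2 (hx x hxx), hne⟩
    rw [hInd] at hmem'
    exact hmem'
  have hvL : v ∉ a0 :: L' := fun h => hv ((hmem v).2 h)
  have hcountL : k + 2 ≤ (a0 :: L').countP p := by
    have hset : {w | w ∈ C.support ∧ G.Adj v w} = ↑(((a0 :: L').filter p).toFinset) := by
      ext w
      simp only [Set.mem_setOf_eq, List.coe_toFinset, List.mem_filter]
      rw [hmem w, hpdef]
    rw [hset, Set.ncard_coe_finset,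
      List.toFinset_card_of_nodup (hndL.filter p), ← List.countP_eq_length_filter] at hdeg
    exact hdeg
  have hlenn : k + 4 ≤ (a0 :: L').length := by
    rw [← hL, hlenL]
    exact hlen
  by_cases hall : ∀ x ∈ a0 :: L', G.Adj v x
  · refine core G v (a0 :: L') (by simp) hndL hvL hcsub hindL ℓ p hpdef
      (hall _ (List.head_mem _)) ?_
    have hducount : (a0 :: L').dropLast.countP p = (a0 :: L').dropLast.length := by
      rw [List.countP_eq_length]
      intro w hw
      exact (hpdef w).2 (hall w ((List.dropLast_sublist _).subset hw))
    rw [hducount, List.length_dropLast]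
    simp only [List.length_cons] at hlenn ⊢
    omega
  · push_neg at hall
    obtain ⟨x0, hx0m, hx0⟩ := hall
    have hzex : ∃ z ∈ a0 :: L', p z := by
      rw [← List.countP_pos_iff]
      omega
    obtain ⟨z, hzm, hz⟩ := hzex
    obtain ⟨i, hi, hiz⟩ := List.mem_iff_getElem.1 hzm
    set L : List V := a0 :: L' with hLdef
    set R₀ : List V := L.rotate (i + 1) with hR₀
    have hR₀len : R₀.length = L.length := List.length_rotate L _
    have hR₀ne : R₀ ≠ [] := by
      intro h
      rw [h] at hR₀len
      simp only [List.length_nil] at hR₀len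
      omega
    have hlastR₀ : R₀.getLast hR₀ne = z := by
      have h1 : R₀.length - 1 < (L.rotate (i+1)).length := by
        rw [List.length_rotate]
        omega
      have hgr := List.getElem_rotate L (i+1) (R₀.length - 1) h1
      have hmod : (R₀.length - 1 + (i+1)) % L.length = i := by
        have h2 : R₀.length - 1 + (i + 1) = L.length + i := by
          have := hR₀len
          omega
        rw [h2, Nat.add_mod_left, Nat.mod_eq_of_lt hi]
      simp only [hmod] at hgr
      rw [List.getLast_eq_getElem]
      exact hgr.trans hiz
    have hplastR₀ : p (R₀.getLast hR₀ne) = true := by rw [hlastR₀]; exact hz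
    have hexR₀ : ∃ y ∈ R₀, ¬ p y = true := by
      refine ⟨x0, ?_, by simpa [hpdef] using hx0⟩
      rw [hR₀, List.mem_rotate]
      exact hx0m
    obtain ⟨A, x', y', B, hsplitR₀, hx', hy'⟩ := exists_boundary p R₀ hR₀ne hplastR₀ hexR₀
    set Rl : List V := y' :: (B ++ (A ++ [x'])) with hRl
    have hRlrot : R₀.rotate (A.length + 1) = Rl := by
      rw [List.rotate_eq_drop_append_take (by rw [hsplitR₀]; simp), hsplitR₀]
      rw [List.drop_append, List.take_append]
      simp [hRl, List.drop_eq_nil_of_le, List.take_of_length_le]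
    have hRlperm : Rl ~ L := by
      rw [← hRlrot, hR₀]
      exact (List.rotate_perm _ _).trans (List.rotate_perm _ _)
    have hccEiff : ∀ e, e ∈ ccE Rl ↔ e ∈ ccE L := by
      intro e
      rw [← hRlrot, hR₀, ccE_rotate, ccE_rotate]
      rw [(List.rotate_perm _ _).mem_iff, (List.rotate_perm _ _).mem_iff]
    have hRl2 : Rl = (y' :: (B ++ A)) ++ [x'] := by simp [hRl]
    refine core G v Rl (by simp [hRl]) (hRlperm.nodup_iff.2 hndL) ?_ ?_ ?_ ℓ p hpdef ?_ ?_
    · rw [hRlperm.mem_iff]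
      exact hvL
    · intro e he
      exact hcsub e ((hccEiff e).1 he)
    · intro e he hx
      exact (hccEiff e).2 (hindL e he (fun x hxe => hRlperm.subset (hx x hxe)))
    · exact (hpdef y').1 hy'
    · have hdl : Rl.dropLast = y' :: (B ++ A) := by
        rw [hRl2]
        exact List.dropLast_concat ..
      have hcR : Rl.countP p = L.countP p := hRlperm.countP_eq p
      have hsplitc : Rl.countP p = Rl.dropLast.countP p := by
        conv_lhs => rw [hRl2]
        have hpx' : p x' = false := by simpa using hx'
        rw [List.countP_append, hdl]
        simp [hpx']
      rw [← hsplitc, hcR]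
      omega
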